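/- For generic x ∈ E^N and 0 ≤ k < q ≤ N, the total variation norm of the k-th derivative term satisfies ‖m(x)^{⊙q} D_{∂^k L_q}‖_tv = Σ_{p=q-k}^{q} |s(p,q-k)| · S(q,p), where s denotes signed Stirling numbers of the first kind and S Stirling numbers of the second kind. -/

import Mathlib

open MeasureTheory
open scoped ENNReal NNReal

/-- Unsigned Stirling numbers of the first kind. -/
def stirlingFstUnsigned : ℕ → ℕ → ℕ
  | 0, 0 => 1
  | 0, _ + 1 => 0
  | _ + 1, 0 => 0
  | n + 1, k + 1 => n * stirlingFstUnsigned n (k + 1) + stirlingFstUnsigned n k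

/-- Signed Stirling numbers of the first kind. -/
def stirlingFst (n k : ℕ) : ℤ := (-1) ^ (n - k) * stirlingFstUnsigned n k

/-- Stirling numbers of the second kind. -/
def stirlingSnd : ℕ → ℕ → ℕ
  | 0, 0 => 1
  | 0, _ + 1 => 0
  | _ + 1, 0 => 0
  | n + 1, k + 1 => (k + 1) * stirlingSnd n (k + 1) + stirlingSnd n k

lemma toSM_congr {α : Type*} [MeasurableSpace α] {μ ν : Measure α} [IsFiniteMeasure μ]
    [IsFiniteMeasure ν] (h : μ = ν) : μ.toSignedMeasure = ν.toSignedMeasure := by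
  subst h; rfl

lemma toSignedMeasure_finset_sum {α : Type*} [MeasurableSpace α] {ι : Type*} (s : Finset ι)
    (μ : ι → Measure α) [∀ i, IsFiniteMeasure (μ i)] :
    (∑ i ∈ s, μ i).toSignedMeasure = ∑ i ∈ s, (μ i).toSignedMeasure := by
  classical
  induction s using Finset.induction_on with
  | empty => simp [Measure.toSignedMeasure_zero]
  | @insert a s ha ih =>
      rw [toSM_congr (Finset.sum_insert ha), Measure.toSignedMeasure_add, ih,
        Finset.sum_insert ha]

lemma sum_split_sign {α M : Type*} [AddCommMonoid M] [∀ (P : Prop), Decidable P]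
    (t : Finset α) (d : α → ℝ) (g : α → M)
    (hg : ∀ z ∈ t, d z = 0 → g z = 0) :
    ∑ z ∈ t, g z
      = ∑ z ∈ t.filter (fun z => 0 < d z), g z + ∑ z ∈ t.filter (fun z => d z < 0), g z := by
  rw [← Finset.sum_filter_add_sum_filter_not t (fun z => 0 < d z) g]
  congr 1
  refine (Finset.sum_subset ?_ ?_).symm
  · intro z hz
    have h1 := Finset.mem_filter.1 hz
    exact Finset.mem_filter.2 ⟨h1.1, by linarith [h1.2]⟩
  · intro z hz hzn
    have h1 := Finset.mem_filter.1 hz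
    refine hg z h1.1 ?_
    by_contra hne
    rcases lt_or_gt_of_ne hne with h | h
    · exact hzn (Finset.mem_filter.2 ⟨h1.1, h⟩)
    · exact h1.2 h

lemma tv_dirac_combo {α : Type*} [MeasurableSpace α] [MeasurableSingletonClass α]
    (t : Finset α) (d : α → ℝ) :
    (∑ z ∈ t, d z • (Measure.dirac z).toSignedMeasure).totalVariation Set.univ
      = ENNReal.ofReal (∑ z ∈ t, |d z|) := by
  classical
  set tp := t.filter (fun z => 0 < d z) with htp
  set tn := t.filter (fun z => d z < 0) with htn
  set μ : Measure α := ∑ z ∈ tp, ((d z).toNNReal : ℝ≥0) • Measure.dirac z with hμ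
  set ν : Measure α := ∑ z ∈ tn, ((-(d z)).toNNReal : ℝ≥0) • Measure.dirac z with hν
  haveI : IsFiniteMeasure μ := by rw [hμ]; infer_instance
  haveI : IsFiniteMeasure ν := by rw [hν]; infer_instance
  have hdisj : ∀ z ∈ tp, z ∉ (tn : Set α) := by
    intro z hz hmem
    have h1 := (Finset.mem_filter.1 hz).2
    have h2 := (Finset.mem_filter.1 (Finset.mem_coe.1 hmem)).2
    linarith
  have hsing : μ ⟂ₘ ν := by
    refine ⟨(tn : Set α), tn.measurableSet, ?_, ?_⟩
    · rw [hμ, Measure.finset_sum_apply]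
      refine Finset.sum_eq_zero fun z hz => ?_
      rw [Measure.smul_apply, Measure.dirac_apply' _ tn.measurableSet,
        Set.indicator_of_notMem (hdisj z hz), smul_zero]
    · rw [hν, Measure.finset_sum_apply]
      refine Finset.sum_eq_zero fun z hz => ?_
      rw [Measure.smul_apply, Measure.dirac_apply' _ tn.measurableSet.compl,
        Set.indicator_of_notMem (by simpa using hz), smul_zero]
  set J : JordanDecomposition α := ⟨μ, ν, hsing⟩ with hJ
  have hμSM : μ.toSignedMeasure = ∑ z ∈ tp, d z • (Measure.dirac z).toSignedMeasure := by
    rw [toSM_congr hμ, toSignedMeasure_finset_sum]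
    refine Finset.sum_congr rfl fun z hz => ?_
    rw [Measure.toSignedMeasure_smul, NNReal.smul_def,
      Real.coe_toNNReal _ (Finset.mem_filter.1 hz).2.le]
  have hνSM : ν.toSignedMeasure = -∑ z ∈ tn, d z • (Measure.dirac z).toSignedMeasure := by
    rw [toSM_congr hν, toSignedMeasure_finset_sum, ← Finset.sum_neg_distrib]
    refine Finset.sum_congr rfl fun z hz => ?_
    rw [Measure.toSignedMeasure_smul, NNReal.smul_def,
      Real.coe_toNNReal _ (by linarith [(Finset.mem_filter.1 hz).2] : (0:ℝ) ≤ -(d z))]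
    exact neg_smul (d z) (Measure.dirac z).toSignedMeasure
  have hkey : J.toSignedMeasure = ∑ z ∈ t, d z • (Measure.dirac z).toSignedMeasure := by
    rw [JordanDecomposition.toSignedMeasure, hJ]
    show μ.toSignedMeasure - ν.toSignedMeasure = _
    rw [hμSM, hνSM, sub_neg_eq_add,
      sum_split_sign t d _ (fun z _ h0 => by rw [h0, zero_smul])]
  have hJD : (∑ z ∈ t, d z • (Measure.dirac z).toSignedMeasure).toJordanDecomposition = J :=
    JordanDecomposition.toSignedMeasure_injective (by
      rw [SignedMeasure.toSignedMeasure_toJordanDecomposition, hkey])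
  unfold SignedMeasure.totalVariation
  rw [hJD]
  show (μ + ν) Set.univ = _
  have hμu : μ Set.univ = ∑ z ∈ tp, ENNReal.ofReal (d z) := by
    rw [hμ, Measure.finset_sum_apply]
    refine Finset.sum_congr rfl fun z hz => ?_
    rw [Measure.smul_apply, measure_univ]
    simp [ENNReal.smul_def, ENNReal.ofReal]
  have hνu : ν Set.univ = ∑ z ∈ tn, ENNReal.ofReal (-(d z)) := by
    rw [hν, Measure.finset_sum_apply]
    refine Finset.sum_congr rfl fun z hz => ?_
    rw [Measure.smul_apply, measure_univ]
    simp [ENNReal.smul_def, ENNReal.ofReal]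
  rw [Measure.add_apply, hμu, hνu,
    ENNReal.ofReal_sum_of_nonneg (fun z _ => abs_nonneg (d z)),
    sum_split_sign t d (fun z => ENNReal.ofReal |d z|)
      (fun z _ h0 => by simp [h0])]
  congr 1
  · exact Finset.sum_congr rfl fun z hz => by
      rw [abs_of_pos (Finset.mem_filter.1 hz).2]
  · exact Finset.sum_congr rfl fun z hz => by
      rw [abs_of_neg (Finset.mem_filter.1 hz).2]

lemma tv_dirac_combo' {α : Type*} [MeasurableSpace α] [MeasurableSingletonClass α]
    {ι : Type*} (s : Finset ι) (c : ι → ℝ) (y : ι → α)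
    (h : ∀ i ∈ s, ∀ j ∈ s, y i = y j → c i = c j) :
    (∑ i ∈ s, c i • (Measure.dirac (y i)).toSignedMeasure).totalVariation Set.univ
      = ENNReal.ofReal (∑ i ∈ s, |c i|) := by
  classical
  have hsum : ∑ i ∈ s, c i • (Measure.dirac (y i)).toSignedMeasure
      = ∑ z ∈ s.image y, (∑ i ∈ s.filter (fun i => y i = z), c i) •
          (Measure.dirac z).toSignedMeasure := by
    rw [← Finset.sum_fiberwise_of_maps_to (fun i hi => Finset.mem_image_of_mem y hi)
      (fun i => c i • (Measure.dirac (y i)).toSignedMeasure)]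
    refine Finset.sum_congr rfl fun z hz => ?_
    rw [Finset.sum_smul]
    refine Finset.sum_congr rfl fun i hi => ?_
    rw [(Finset.mem_filter.1 hi).2]
  rw [hsum, tv_dirac_combo]
  congr 1
  rw [← Finset.sum_fiberwise_of_maps_to (fun i hi => Finset.mem_image_of_mem y hi)
    (fun i => |c i|)]
  refine Finset.sum_congr rfl fun z hz => ?_
  obtain ⟨i₀, hi₀s, hi₀⟩ := Finset.mem_image.1 hz
  have hconst : ∀ i ∈ s.filter (fun i => y i = z), c i = c i₀ := fun i hi => by
    obtain ⟨his, hyi⟩ := Finset.mem_filter.1 hi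
    exact h i his i₀ hi₀s (by rw [hyi, hi₀])
  have h1 : ∑ i ∈ s.filter (fun i => y i = z), c i
      = (s.filter (fun i => y i = z)).card • c i₀ := by
    rw [Finset.sum_congr rfl hconst, Finset.sum_const]
  have h2 : ∑ i ∈ s.filter (fun i => y i = z), |c i|
      = (s.filter (fun i => y i = z)).card • |c i₀| := by
    rw [Finset.sum_congr rfl (fun i hi => by rw [hconst i hi]), Finset.sum_const]
  rw [h1, h2, abs_nsmul]

lemma count_image_card (m : ℕ) : ∀ n p : ℕ,
    ((Finset.univ : Finset (Fin n → Fin m)).filter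
        (fun f => (Finset.univ.image f).card = p)).card
      = m.descFactorial p * stirlingSnd n p := by
  intro n
  induction n with
  | zero =>
      intro p
      have himg : ∀ f : Fin 0 → Fin m, (Finset.univ.image f).card = 0 := fun f => by simp
      cases p with
      | zero =>
          rw [Finset.filter_true_of_mem (fun f _ => himg f)]
          simp [stirlingSnd, Finset.card_univ]
      | succ p =>
          rw [Finset.filter_false_of_mem (fun f _ => by rw [himg f]; omega)]
          simp [stirlingSnd]
  | succ n ih =>
      intro p
      classical
      have himg : ∀ (z : Fin m) (g : Fin n → Fin m),
          Finset.univ.image (Fin.cons z g : Fin (n+1) → Fin m)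
            = insert z (Finset.univ.image g) := by
        intro z g
        ext w
        simp [Finset.mem_image, Fin.exists_fin_succ, eq_comm]
      cases p with
      | zero =>
          rw [Finset.filter_false_of_mem (fun f _ => ?_)]
          · simp [stirlingSnd]
          · have : f 0 ∈ Finset.univ.image f := Finset.mem_image_of_mem f (Finset.mem_univ 0)
            intro h0
            rw [Finset.card_eq_zero.1 h0] at this
            exact absurd this (Finset.notMem_empty _)
      | succ p =>
          rw [Finset.card_filter]
          rw [← Fintype.sum_equiv (Fin.consEquiv (fun _ => Fin m))
            (fun zg => if (Finset.univ.image (Fin.cons zg.1 zg.2 : Fin (n+1) → Fin m)).card = p + 1 then (1:ℕ) else 0)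
            (fun f => if (Finset.univ.image f).card = p + 1 then 1 else 0)
            (fun zg => rfl)]
          rw [Fintype.sum_prod_type, Finset.sum_comm]
          have hz : ∀ g : Fin n → Fin m,
              (∑ z : Fin m, if (Finset.univ.image (Fin.cons z g : Fin (n+1) → Fin m)).card = p + 1 then (1:ℕ) else 0)
              = (if (Finset.univ.image g).card = p + 1 then (p+1) else 0)
                + (if (Finset.univ.image g).card = p then m - p else 0) := by
            intro g
            rw [← Finset.sum_add_sum_compl (Finset.univ.image g)]
            congr 1
            · rw [Finset.sum_congr rfl (fun z hzz => by
                rw [himg z g, Finset.card_insert_of_mem hzz])]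
              rw [Finset.sum_const, smul_eq_mul, mul_ite, mul_one, mul_zero]
              by_cases hc : (Finset.univ.image g).card = p + 1 <;> simp [hc]
            · rw [Finset.sum_congr rfl (fun z hzz => by
                rw [himg z g, Finset.card_insert_of_notMem (Finset.mem_compl.1 hzz)])]
              rw [Finset.sum_const, smul_eq_mul, mul_ite, mul_one, mul_zero,
                Finset.card_compl, Fintype.card_fin]
              by_cases hc : (Finset.univ.image g).card = p <;> simp [hc]
          rw [Finset.sum_congr rfl (fun g _ => hz g), Finset.sum_add_distrib]
          rw [← Finset.sum_filter, ← Finset.sum_filter, Finset.sum_const, Finset.sum_const,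
            ih (p+1), ih p, smul_eq_mul, smul_eq_mul]
          show m.descFactorial (p+1) * stirlingSnd n (p+1) * (p+1)
              + m.descFactorial p * stirlingSnd n p * (m - p)
            = m.descFactorial (p+1) * stirlingSnd (n+1) (p+1)
          rw [show stirlingSnd (n+1) (p+1) = (p + 1) * stirlingSnd n (p + 1) + stirlingSnd n p
            from rfl]
          rw [Nat.descFactorial_succ]
          ring

/-- For generic `x ∈ E^N` and `0 ≤ k < q ≤ N`,
`‖m(x)^{⊙q} D_{∂^k L_q}‖_tv = Σ_{p=q-k}^{q} |s(p,q-k)| · S(q,p)`, where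
`∂^k L_q = Σ_{p=q-k}^q s(p,q-k)·(1/(q)_p)·Σ_{a ∈ [q]^[q]_p} a` acts on the restricted
empirical measure `m(x)^{⊙q}` by (linearly extended) pushforward `y ↦ y ∘ a`. -/
theorem stmt_11 {E : Type*} [MeasurableSpace E] [MeasurableSingletonClass E]
    (N q k : ℕ) (hk : k < q) (hqN : q ≤ N) (x : Fin N → E) (hx : Function.Injective x) :
    (∑ p ∈ Finset.Icc (q - k) q,
        ∑ a ∈ Finset.univ.filter
            (fun a : Fin q → Fin q => (Finset.univ.image a).card = p),
          ((stirlingFst p (q - k) : ℝ) / (q.descFactorial p : ℝ)) •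
            (Measure.map (fun y : Fin q → E => y ∘ a)
                (((N.descFactorial q : ℝ≥0))⁻¹ •
                  ∑ b : Fin q ↪ Fin N,
                    Measure.dirac (fun i => x (b i)))).toSignedMeasure).totalVariation
        Set.univ =
      ENNReal.ofReal
        (∑ p ∈ Finset.Icc (q - k) q,
          (|stirlingFst p (q - k)| : ℝ) * (stirlingSnd q p : ℝ)) := by
  classical
  have hφ : ∀ a : Fin q → Fin q, Measurable (fun y : Fin q → E => y ∘ a) :=
    fun a => measurable_pi_lambda _ fun i => measurable_pi_apply (a i)
  have hmap : ∀ a : Fin q → Fin q,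
      Measure.map (fun y : Fin q → E => y ∘ a)
          (((N.descFactorial q : ℝ≥0))⁻¹ • ∑ b : Fin q ↪ Fin N, Measure.dirac (fun i => x (b i)))
        = ((N.descFactorial q : ℝ≥0))⁻¹ •
            ∑ b : Fin q ↪ Fin N, Measure.dirac (fun i => x (b (a i))) := by
    intro a
    rw [Measure.map_smul]
    congr 1
    ext s hs
    rw [Measure.map_apply (hφ a) hs, Measure.finset_sum_apply, Measure.finset_sum_apply]
    refine Finset.sum_congr rfl fun b _ => ?_
    rw [Measure.dirac_apply' _ (hφ a hs), Measure.dirac_apply' _ hs]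
    have hcomp : ((fun i => x (b i)) ∘ a) = fun i => x (b (a i)) := rfl
    simp only [Set.indicator_apply, Set.mem_preimage, hcomp, Pi.one_apply]
  have hSM : ∀ a : Fin q → Fin q,
      (Measure.map (fun y : Fin q → E => y ∘ a)
          (((N.descFactorial q : ℝ≥0))⁻¹ • ∑ b : Fin q ↪ Fin N,
            Measure.dirac (fun i => x (b i)))).toSignedMeasure
        = ((N.descFactorial q : ℝ))⁻¹ •
            ∑ b : Fin q ↪ Fin N, (Measure.dirac (fun i => x (b (a i)))).toSignedMeasure := by
    intro a
    rw [toSM_congr (hmap a), Measure.toSignedMeasure_smul, toSignedMeasure_finset_sum,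
      NNReal.smul_def, NNReal.coe_inv, NNReal.coe_natCast]
  set C : ℕ → ℝ := fun p => (stirlingFst p (q - k) : ℝ) / (q.descFactorial p : ℝ)
      * (N.descFactorial q : ℝ)⁻¹ with hC
  set ISet := (Finset.Icc (q - k) q).sigma (fun p =>
      (Finset.univ.filter (fun a : Fin q → Fin q => (Finset.univ.image a).card = p)).sigma
        (fun _ => (Finset.univ : Finset (Fin q ↪ Fin N)))) with hISet
  have hT : (∑ p ∈ Finset.Icc (q - k) q, ∑ a ∈ Finset.univ.filter
        (fun a : Fin q → Fin q => (Finset.univ.image a).card = p),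
        ((stirlingFst p (q - k) : ℝ) / (q.descFactorial p : ℝ)) •
          (Measure.map (fun y : Fin q → E => y ∘ a)
            (((N.descFactorial q : ℝ≥0))⁻¹ • ∑ b : Fin q ↪ Fin N,
              Measure.dirac (fun i => x (b i)))).toSignedMeasure)
      = ∑ i ∈ ISet, C i.1 •
          (Measure.dirac (fun t => x (i.2.2 (i.2.1 t)))).toSignedMeasure := by
    rw [hISet, Finset.sum_sigma]
    refine Finset.sum_congr rfl fun p hp => ?_
    rw [Finset.sum_sigma]
    refine Finset.sum_congr rfl fun a ha => ?_
    rw [hSM a, smul_smul, Finset.smul_sum]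
  have himcard : ∀ (a0 : Fin q → Fin q) (b0 : Fin q ↪ Fin N),
      (Finset.univ.image (fun t => (b0 (a0 t)))).card = (Finset.univ.image a0).card := by
    intro a0 b0
    rw [show (fun t => (b0 (a0 t))) = ⇑b0 ∘ a0 from rfl, ← Finset.image_image,
      Finset.card_image_of_injective _ b0.injective]
  have hcons : ∀ i ∈ ISet, ∀ j ∈ ISet,
      (fun t => x (i.2.2 (i.2.1 t))) = (fun t => x (j.2.2 (j.2.1 t))) → C i.1 = C j.1 := by
    rintro ⟨p, a, b⟩ hi ⟨p', a', b'⟩ hj hy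
    simp only [hISet, Finset.mem_sigma, Finset.mem_filter] at hi hj
    have hab : ∀ t, b (a t) = b' (a' t) := fun t => hx (congrFun hy t)
    have e3 : Finset.univ.image (fun t => (b (a t)))
        = Finset.univ.image (fun t => (b' (a' t))) :=
      Finset.image_congr (fun t _ => hab t)
    have hp : p = p' := by
      rw [← hi.2.1.2, ← hj.2.1.2, ← himcard a b, ← himcard a' b', e3]
    show C p = C p'
    rw [hp]
  have key := tv_dirac_combo' ISet (fun i => C i.1)
      (fun i => fun t => x (i.2.2 (i.2.1 t))) hcons
  rw [hT, key]
  congr 1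
  have hsplit : ∑ i ∈ ISet, |C i.1|
      = ∑ p ∈ Finset.Icc (q - k) q, ∑ a ∈ Finset.univ.filter
          (fun a : Fin q → Fin q => (Finset.univ.image a).card = p),
          ∑ _b : Fin q ↪ Fin N, |C p| := by
    rw [hISet, Finset.sum_sigma]
    refine Finset.sum_congr rfl fun p _ => ?_
    rw [Finset.sum_sigma]
  rw [hsplit]
  refine Finset.sum_congr rfl fun p hp => ?_
  have hpq : p ≤ q := (Finset.mem_Icc.1 hp).2
  have h1 : (q.descFactorial p : ℝ) ≠ 0 := by
    rw [Ne, Nat.cast_eq_zero, Nat.descFactorial_eq_zero_iff_lt]; omega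
  have h2 : (N.descFactorial q : ℝ) ≠ 0 := by
    rw [Ne, Nat.cast_eq_zero, Nat.descFactorial_eq_zero_iff_lt]; omega
  rw [Finset.sum_const, Finset.sum_const, count_image_card q q p, Finset.card_univ,
    Fintype.card_embedding_eq, Fintype.card_fin, Fintype.card_fin,
    nsmul_eq_mul, nsmul_eq_mul, hC]
  push_cast [Int.cast_abs]
  rw [abs_mul, abs_div, abs_inv, Nat.abs_cast, Nat.abs_cast]
  field_simp
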